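/- arXiv:2401.15566 — 2 statements merged into one kernel-verified Lean document; each statement's English description precedes it below -/
import Mathlib

section
/- Let X be an m×n real matrix of rank r, I ⊆ [m] a set of row indices and J ⊆ [n] a set of column indices. Let C = X[:,J] be the column submatrix, R = X[I,:] the row submatrix, and U = X[I,J] the intersection submatrix. If rank(U) = rank(X), then X = C U⁺ R, where U⁺ denotes the Moore–Penrose pseudoinverse of U. -/
open Matrix

/-- If the column space of `B` is contained in the column space of `A`,
then `B` factors as `A * W`. -/
lemma exists_factor {a b c : Type*} [Fintype a] [Fintype b] [Fintype c] [DecidableEq c]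
    (A : Matrix a b ℝ) (B : Matrix a c ℝ)
    (h : LinearMap.range B.mulVecLin ≤ LinearMap.range A.mulVecLin) :
    ∃ W : Matrix b c ℝ, B = A * W := by
  have hcol : ∀ j : c, ∃ w : b → ℝ, A.mulVec w = Bᵀ j := by
    intro j
    have hmem : Bᵀ j ∈ LinearMap.range B.mulVecLin :=
      ⟨Pi.single j 1, by ext i; simp [Matrix.mulVecLin_apply]⟩
    exact h hmem
  choose w hw using hcol
  refine ⟨fun k j => w j k, ?_⟩
  ext i j
  have := congrFun (hw j) i
  simp only [Matrix.mulVec, dotProduct, transpose_apply] at this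
  change B i j = ∑ x, A i x * w j x
  exact this.symm

/-- `Up` is the Moore–Penrose pseudoinverse of `U` (real matrices),
characterized by the four Penrose conditions. -/
def IsMoorePenroseInv {ι κ : Type*} [Fintype ι] [Fintype κ]
    (U : Matrix ι κ ℝ) (Up : Matrix κ ι ℝ) : Prop :=
  U * Up * U = U ∧ Up * U * Up = Up ∧ (U * Up)ᵀ = U * Up ∧ (Up * U)ᵀ = Up * U

/-- CUR decomposition: if `rank U = rank X`, then `X = C U⁺ R`. -/
theorem cur_decomposition {m n r : ℕ} (X : Matrix (Fin m) (Fin n) ℝ)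
    (I : Finset (Fin m)) (J : Finset (Fin n))
    (hX : X.rank = r)
    (C : Matrix (Fin m) J ℝ) (R : Matrix I (Fin n) ℝ) (U : Matrix I J ℝ)
    (hC : C = X.submatrix id (fun j : J => (j : Fin n)))
    (hR : R = X.submatrix (fun i : I => (i : Fin m)) id)
    (hU : U = X.submatrix (fun i : I => (i : Fin m)) (fun j : J => (j : Fin n)))
    (Up : Matrix J I ℝ) (hUp : IsMoorePenroseInv U Up)
    (hrank : U.rank = X.rank) :
    X = C * Up * R := by
  classical
  -- selection matrices
  set P : Matrix (Fin n) J ℝ := Matrix.of fun j k => if (k : Fin n) = j then 1 else 0 with hP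
  set Q : Matrix I (Fin m) ℝ := Matrix.of fun i i' => if (i : Fin m) = i' then 1 else 0 with hQ
  have hCP : C = X * P := by
    rw [hC]; ext i k
    simp [hP, Matrix.mul_apply, Matrix.of_apply, Finset.sum_ite_eq]
  have hRQ : R = Q * X := by
    rw [hR]; ext i j
    simp [hQ, Matrix.mul_apply, Matrix.of_apply, Finset.sum_ite_eq']
  have hUQC : U = Q * C := by
    rw [hU, hCP, ← Matrix.mul_assoc]
    ext i k
    simp [hP, hQ, Matrix.mul_apply, Matrix.of_apply, Finset.sum_ite_eq, Finset.sum_ite_eq']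
  -- rank chain
  have hCX_le : C.rank ≤ X.rank := hCP ▸ Matrix.rank_mul_le_left X P
  have hUC_le : U.rank ≤ C.rank := hUQC ▸ Matrix.rank_mul_le_right Q C
  have hrC : C.rank = X.rank := le_antisymm hCX_le (hrank ▸ hUC_le)
  have hrU : U.rank = C.rank := hrank.trans hrC.symm
  -- column space of C equals column space of X
  have hle1 : LinearMap.range C.mulVecLin ≤ LinearMap.range X.mulVecLin := by
    rw [hCP, Matrix.mulVecLin_mul]
    exact LinearMap.range_comp_le_range _ _
  have hEq1 : LinearMap.range C.mulVecLin = LinearMap.range X.mulVecLin :=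
    Submodule.eq_of_le_of_finrank_le hle1 (le_of_eq hrC.symm)
  obtain ⟨W, hW⟩ := exists_factor C X hEq1.ge
  -- column space of Uᵀ equals column space of Cᵀ
  have hUt : Uᵀ = Cᵀ * Qᵀ := by rw [hUQC, Matrix.transpose_mul]
  have hle2 : LinearMap.range Uᵀ.mulVecLin ≤ LinearMap.range Cᵀ.mulVecLin := by
    rw [hUt, Matrix.mulVecLin_mul]
    exact LinearMap.range_comp_le_range _ _
  have hrUt : Uᵀ.rank = Cᵀ.rank := by
    rw [Matrix.rank_transpose, Matrix.rank_transpose]; exact hrU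
  have hEq2 : LinearMap.range Uᵀ.mulVecLin = LinearMap.range Cᵀ.mulVecLin :=
    Submodule.eq_of_le_of_finrank_le hle2 (le_of_eq hrUt.symm)
  obtain ⟨Z, hZ⟩ := exists_factor Uᵀ Cᵀ hEq2.ge
  have hCZ : C = Zᵀ * U := by
    have := congrArg Matrix.transpose hZ
    simpa [Matrix.transpose_mul] using this
  -- R = U * W
  have hRUW : R = U * W := by
    rw [hRQ, hW, ← Matrix.mul_assoc, ← hUQC]
  -- finish
  have hCUpU : C * Up * U = C := by
    conv_lhs => rw [hCZ]
    rw [Matrix.mul_assoc, Matrix.mul_assoc, ← Matrix.mul_assoc U Up U, hUp.1, ← hCZ]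
  rw [hRUW, ← Matrix.mul_assoc (C * Up) U W, hCUpU, ← hW]
end

section
/- Let X be an m×n matrix of rank r, and suppose C = X[:,J] satisfies rank(C) = r and R = X[I,:] satisfies rank(R) = r. Then U = X[I,J] satisfies rank(U) = r. -/
open Matrix

/-- If the row and column submatrices `R` and `C` have full rank `r = rank X`,
then the intersection submatrix `U` also has rank `r`. -/
theorem rank_intersection_full {m n r : ℕ} (X : Matrix (Fin m) (Fin n) ℝ)
    (I : Finset (Fin m)) (J : Finset (Fin n))
    (hX : X.rank = r)
    (C : Matrix (Fin m) J ℝ) (R : Matrix I (Fin n) ℝ) (U : Matrix I J ℝ)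
    (hC : C = X.submatrix id (fun j : J => (j : Fin n)))
    (hR : R = X.submatrix (fun i : I => (i : Fin m)) id)
    (hU : U = X.submatrix (fun i : I => (i : Fin m)) (fun j : J => (j : Fin n)))
    (hCrank : C.rank = r) (hRrank : R.rank = r) :
    U.rank = r := by
  classical
  subst hC hR hU
  set φ : (Fin n → ℝ) →ₗ[ℝ] (J → ℝ) :=
    LinearMap.funLeft ℝ ℝ (fun j : (J : Finset (Fin n)) => (j : Fin n)) with hφ
  -- rows of C and U are images under φ of rows of X and R respectively
  have hCrow : (X.submatrix id (fun j : J => (j : Fin n))) = φ ∘ X := rfl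
  have hUrow : (X.submatrix (fun i : I => (i : Fin m)) (fun j : J => (j : Fin n)))
      = φ ∘ (X.submatrix (fun i : I => (i : Fin m)) id) := rfl
  -- row span of R equals row span of X
  have hle : Submodule.span ℝ (Set.range (X.submatrix (fun i : I => (i : Fin m)) id))
      ≤ Submodule.span ℝ (Set.range X) := by
    apply Submodule.span_mono
    rintro _ ⟨i, rfl⟩
    exact ⟨(i : Fin m), rfl⟩
  have hfr : Module.finrank ℝ (Submodule.span ℝ (Set.range X))
      ≤ Module.finrank ℝ (Submodule.span ℝ (Set.range (X.submatrix (fun i : I => (i : Fin m)) id))) := by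
    exact le_of_eq ((Matrix.rank_eq_finrank_span_row X).symm.trans (hX.trans
      (hRrank.symm.trans (Matrix.rank_eq_finrank_span_row _))))
  have hspan : Submodule.span ℝ (Set.range (X.submatrix (fun i : I => (i : Fin m)) id))
      = Submodule.span ℝ (Set.range X) :=
    Submodule.eq_of_le_of_finrank_le hle hfr
  have hUC : Submodule.span ℝ (Set.range
        (X.submatrix (fun i : I => (i : Fin m)) (fun j : J => (j : Fin n))))
      = Submodule.span ℝ (Set.range (X.submatrix id (fun j : J => (j : Fin n)))) := by
    rw [hUrow, hCrow]
    have e1 : Set.range (φ ∘ X.submatrix (fun i : I => (i : Fin m)) id)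
        = φ '' Set.range (X.submatrix (fun i : I => (i : Fin m)) id) := Set.range_comp _ _
    have e2 : Set.range (φ ∘ X) = φ '' Set.range X := Set.range_comp _ _
    rw [e1, e2, ← Submodule.map_span, ← Submodule.map_span,
      hspan]
  rw [Matrix.rank_eq_finrank_span_row, Matrix.row, hUC]
  exact (Matrix.rank_eq_finrank_span_row _).symm.trans hCrank
end
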